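/- Let V be a positive definite p×p real matrix, let α ∈ (0,1), let S : ℝᵖ → ℝ be Borel measurable, and let q ∈ ℝ satisfy N(0,V)({z : S(z) > q}) = α. Then for every nonzero c ∈ ℝᵖ: N(0,V)({z : S(z + c) > q}) ≤ Φ(z_α + √(cᵀ·V⁻¹·c)). (Neyman–Pearson bound, the key inequality in the proof of Theorem 5.) -/

import Mathlib

open MeasureTheory Filter Topology ProbabilityTheory Matrix

noncomputable section

/-- The standard normal density `φ(x) = exp(−x²/2)/√(2π)`. -/
def normalPDF (x : ℝ) : ℝ := Real.exp (-(x ^ 2) / 2) / Real.sqrt (2 * Real.pi)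

/-- The standard normal CDF `Φ`. -/
def stdNormalCDF (x : ℝ) : ℝ := ∫ t in Set.Iic x, normalPDF t

open scoped ComplexOrder in
/-- The positive semidefinite square root of a positive semidefinite matrix (the definition
`Matrix.PosSemidef.sqrt` of the older Mathlib, which has since been removed). -/
def Matrix.PosSemidef.sqrt {n : Type*} [Fintype n] [DecidableEq n] {𝕜 : Type*} [RCLike 𝕜]
    {A : Matrix n n 𝕜} (hA : A.PosSemidef) : Matrix n n 𝕜 :=
  hA.1.eigenvectorUnitary.1 * diagonal ((fun x : ℝ => (x : 𝕜)) ∘ (fun i => Real.sqrt (hA.1.eigenvalues i))) *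
    (star hA.1.eigenvectorUnitary : Matrix n n 𝕜)

/-- The Gaussian measure `N(c, V)` on `ℝᵖ`: the pushforward of the product of `p`
standard Gaussian measures under `z ↦ c + V^{1/2}·z`, where `V^{1/2}` is the positive
semidefinite square root of `V`. -/
def gaussianPi {p : ℕ} (c : Fin p → ℝ) {V : Matrix (Fin p) (Fin p) ℝ}
    (hV : V.PosSemidef) : Measure (Fin p → ℝ) :=
  Measure.map (fun z => c + hV.sqrt.mulVec z)
    (Measure.pi fun _ : Fin p => gaussianReal 0 1)


open scoped NNReal ENNReal
open Real

section NPAux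

open scoped ComplexOrder in
lemma Matrix.PosSemidef.sqrt_mul_self {n : Type*} [Fintype n] [DecidableEq n] {𝕜 : Type*} [RCLike 𝕜]
    {A : Matrix n n 𝕜} (hA : A.PosSemidef) : hA.sqrt * hA.sqrt = A := by
  have hU : ∀ X : Matrix n n 𝕜, (star hA.1.eigenvectorUnitary : Matrix n n 𝕜) *
      ((hA.1.eigenvectorUnitary : Matrix n n 𝕜) * X) = X := fun X => by
    rw [← mul_assoc, Unitary.coe_star_mul_self, one_mul]
  have hDD : diagonal ((fun x : ℝ => (x : 𝕜)) ∘ (fun i => Real.sqrt (hA.1.eigenvalues i))) *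
      (diagonal ((fun x : ℝ => (x : 𝕜)) ∘ (fun i => Real.sqrt (hA.1.eigenvalues i))) *
        (star hA.1.eigenvectorUnitary : Matrix n n 𝕜))
      = diagonal (RCLike.ofReal ∘ hA.1.eigenvalues) * (star hA.1.eigenvectorUnitary : Matrix n n 𝕜) := by
    rw [← mul_assoc, diagonal_mul_diagonal]
    congr 2
    funext i
    simp only [Function.comp_apply]
    rw [← RCLike.ofReal_mul, Real.mul_self_sqrt (hA.eigenvalues_nonneg i)]
  conv_rhs => rw [hA.1.spectral_theorem, Unitary.conjStarAlgAut_apply]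
  unfold Matrix.PosSemidef.sqrt
  simp only [mul_assoc, hU]
  rw [hDD]

open scoped ComplexOrder in
lemma Matrix.PosSemidef.sqrt_isHermitian {n : Type*} [Fintype n] [DecidableEq n] {𝕜 : Type*}
    [RCLike 𝕜] {A : Matrix n n 𝕜} (hA : A.PosSemidef) : hA.sqrt.IsHermitian := by
  unfold Matrix.PosSemidef.sqrt IsHermitian
  rw [conjTranspose_mul, conjTranspose_mul, diagonal_conjTranspose, mul_assoc]
  congr 2
  · exact star_star _
  · congr 1
    funext i
    simp


lemma conv_pdf_pt (v w : ℝ≥0) (hv : v ≠ 0) (hw : w ≠ 0) (u x : ℝ) :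
    gaussianPDFReal 0 v x * gaussianPDFReal 0 w (u - x)
      = gaussianPDFReal 0 (v + w) u * gaussianPDFReal (v * u / (v + w)) (v * w / (v + w)) x := by
  have hv' : (0:ℝ) < v := lt_of_le_of_ne v.coe_nonneg (by exact_mod_cast (Ne.symm hv))
  have hw' : (0:ℝ) < w := lt_of_le_of_ne w.coe_nonneg (by exact_mod_cast (Ne.symm hw))
  have hvw : (0:ℝ) < (v:ℝ) + w := by positivity
  have hco : ((v * w / (v + w) : ℝ≥0) : ℝ) = (v:ℝ) * w / ((v:ℝ) + w) := by push_cast; ring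
  have hπ : (0:ℝ) < 2 * π := by positivity
  simp only [gaussianPDFReal, sub_zero, NNReal.coe_add, hco]
  rw [mul_mul_mul_comm, ← Real.exp_add, mul_mul_mul_comm, ← Real.exp_add]
  congr 1
  · rw [← mul_inv, ← mul_inv, ← Real.sqrt_mul (by positivity), ← Real.sqrt_mul (by positivity)]
    congr 2
    field_simp
  · congr 1
    field_simp
    ring

lemma conv_pdf_int (v w : ℝ≥0) (hv : v ≠ 0) (hw : w ≠ 0) (u : ℝ) :
    ∫ x, gaussianPDFReal 0 v x * gaussianPDFReal 0 w (u - x)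
      = gaussianPDFReal 0 (v + w) u := by
  have hvw : (v * w / (v + w) : ℝ≥0) ≠ 0 := by
    refine div_ne_zero (mul_ne_zero hv hw) ?_
    simp [add_eq_zero, hv, hw]
  simp_rw [conv_pdf_pt v w hv hw u]
  rw [integral_const_mul, integral_gaussianPDFReal_eq_one _ hvw, mul_one]

lemma measurable_pdf2 (w : ℝ≥0) :
    Measurable (fun p : ℝ × ℝ => gaussianPDF p.1 w p.2) := by
  unfold gaussianPDF gaussianPDFReal
  fun_prop

lemma pdf_bdd (w : ℝ≥0) (μ x : ℝ) : ‖gaussianPDFReal μ w x‖ ≤ (Real.sqrt (2 * π * w))⁻¹ := by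
  rw [Real.norm_eq_abs, abs_of_nonneg (gaussianPDFReal_nonneg _ _ _)]
  unfold gaussianPDFReal
  have h1 : Real.exp (-(x - μ)^2 / (2 * w)) ≤ 1 := by
    rw [Real.exp_le_one_iff]
    apply div_nonpos_of_nonpos_of_nonneg
    · simp [sq_nonneg]
    · positivity
  calc (Real.sqrt (2 * π * w))⁻¹ * Real.exp (-(x - μ)^2 / (2 * w))
      ≤ (Real.sqrt (2 * π * w))⁻¹ * 1 := by
        apply mul_le_mul_of_nonneg_left h1 (by positivity)
    _ = _ := mul_one _

lemma conv_gaussian_main (v w : ℝ≥0) (hv : v ≠ 0) (hw : w ≠ 0) :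
    Measure.map (fun p : ℝ × ℝ => p.1 + p.2)
      ((gaussianReal 0 v).prod (gaussianReal 0 w)) = gaussianReal 0 (v + w) := by
  ext s hs
  rw [Measure.map_apply measurable_add hs,
    Measure.prod_apply (measurable_add hs)]
  have h1 : ∀ x : ℝ, gaussianReal 0 w (Prod.mk x ⁻¹' ((fun p : ℝ × ℝ => p.1 + p.2) ⁻¹' s))
      = ∫⁻ y in s, gaussianPDF x w y := by
    intro x
    have he : Prod.mk x ⁻¹' ((fun p : ℝ × ℝ => p.1 + p.2) ⁻¹' s) = (fun y => x + y) ⁻¹' s := rfl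
    rw [he, ← Measure.map_apply (measurable_const_add x) hs, gaussianReal_map_const_add,
      zero_add, gaussianReal_apply _ hw]
  simp_rw [h1]
  rw [gaussianReal_of_var_ne_zero 0 hv]
  have hm_inner : Measurable (fun x : ℝ => ∫⁻ y in s, gaussianPDF x w y) := by
    exact (measurable_pdf2 w).lintegral_prod_right'
  rw [lintegral_withDensity_eq_lintegral_mul _ (measurable_gaussianPDF 0 v) hm_inner]
  simp only [Pi.mul_apply]
  have hswap : ∫⁻ x, gaussianPDF 0 v x * ∫⁻ y in s, gaussianPDF x w y
      = ∫⁻ y in s, ∫⁻ x, gaussianPDF 0 v x * gaussianPDF x w y := by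
    have hpush : ∀ x : ℝ, gaussianPDF 0 v x * ∫⁻ y in s, gaussianPDF x w y
        = ∫⁻ y in s, gaussianPDF 0 v x * gaussianPDF x w y := fun x =>
      (lintegral_const_mul _ ((measurable_pdf2 w).comp measurable_prodMk_left)).symm
    simp_rw [hpush]
    rw [lintegral_lintegral_swap]
    apply (((measurable_gaussianPDF 0 v).comp measurable_fst).mul (measurable_pdf2 w)).aemeasurable
  rw [hswap]
  have h2 : ∀ y : ℝ, ∫⁻ x, gaussianPDF 0 v x * gaussianPDF x w y
      = gaussianPDF 0 (v + w) y := by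
    intro y
    have hfg : ∀ x : ℝ, gaussianPDF 0 v x * gaussianPDF x w y
        = ENNReal.ofReal (gaussianPDFReal 0 v x * gaussianPDFReal 0 w (y - x)) := by
      intro x
      rw [gaussianPDFReal_sub, zero_add]
      unfold gaussianPDF
      rw [ENNReal.ofReal_mul (gaussianPDFReal_nonneg _ _ _)]
    simp_rw [hfg]
    rw [← ofReal_integral_eq_lintegral_ofReal]
    · rw [conv_pdf_int v w hv hw y]; rfl
    · apply Integrable.bdd_mul
      · exact (integrable_gaussianPDFReal 0 w).comp_sub_left y
      · exact (measurable_gaussianPDFReal 0 v).aestronglyMeasurable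
      · exact Filter.Eventually.of_forall fun x => pdf_bdd v 0 x
    · exact Filter.Eventually.of_forall fun x =>
        mul_nonneg (gaussianPDFReal_nonneg _ _ _) (gaussianPDFReal_nonneg _ _ _)
  simp_rw [h2]
  rw [gaussianReal_apply _ (by simp [add_eq_zero, hv, hw]) s]

lemma conv_gaussian (v w : ℝ≥0) :
    Measure.map (fun p : ℝ × ℝ => p.1 + p.2)
      ((gaussianReal 0 v).prod (gaussianReal 0 w)) = gaussianReal 0 (v + w) := by
  by_cases hv : v = 0
  · rw [hv, gaussianReal_zero_var, Measure.dirac_prod, Measure.map_map measurable_add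
      (measurable_prodMk_left), zero_add]
    have h : (fun p : ℝ × ℝ => p.1 + p.2) ∘ (Prod.mk (0:ℝ)) = fun y : ℝ => (0:ℝ) + y := rfl
    rw [h]
    simpa using gaussianReal_map_const_add (μ := 0) (v := w) 0
  by_cases hw : w = 0
  · rw [hw, gaussianReal_zero_var, Measure.prod_dirac, Measure.map_map measurable_add
      (measurable_prodMk_right), add_zero]
    have h : (fun p : ℝ × ℝ => p.1 + p.2) ∘ (fun x : ℝ => (x, (0:ℝ))) = fun x : ℝ => x + 0 := rfl
    rw [h]
    simpa using gaussianReal_map_add_const (μ := 0) (v := v) 0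
  exact conv_gaussian_main v w hv hw

lemma measurable_linfun {n : ℕ} (d : Fin n → ℝ) :
    Measurable (fun z : Fin n → ℝ => ∑ i, d i * z i) :=
  Finset.measurable_sum _ fun i _ => (measurable_pi_apply i).const_mul _

lemma map_linear (n : ℕ) (d : Fin n → ℝ) :
    Measure.map (fun z : Fin n → ℝ => ∑ i, d i * z i)
        (Measure.pi fun _ : Fin n => gaussianReal 0 1)
      = gaussianReal 0 ⟨∑ i, d i ^ 2, Finset.sum_nonneg fun i _ => sq_nonneg _⟩ := by
  induction n with
  | zero =>
      have h0 : @Eq ℝ≥0 ⟨∑ i : Fin 0, d i ^ 2, Finset.sum_nonneg fun i _ => sq_nonneg _⟩ 0 := by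
        ext; simp; rfl
      rw [h0, gaussianReal_zero_var]
      have : (fun z : Fin 0 → ℝ => ∑ i, d i * z i) = fun _ => (0:ℝ) := by
        funext z; simp
      rw [this, Measure.map_const]
      simp
  | succ n ih =>
      have hmp := measurePreserving_piFinSuccAbove (fun _ : Fin (n+1) => gaussianReal 0 1) 0
      set e := MeasurableEquiv.piFinSuccAbove (fun _ : Fin (n+1) => ℝ) 0 with he
      have hcomp : (fun z : Fin (n+1) → ℝ => ∑ i, d i * z i)
          = (fun p : ℝ × (Fin n → ℝ) => d 0 * p.1 + ∑ j : Fin n, d j.succ * p.2 j) ∘ e := by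
        funext z
        simp [he, MeasurableEquiv.piFinSuccAbove, Fin.sum_univ_succ, Fin.zero_succAbove, Fin.tail]
      have hm2 : Measurable (fun p : ℝ × (Fin n → ℝ) => d 0 * p.1 + ∑ j : Fin n, d j.succ * p.2 j) :=
        (measurable_fst.const_mul _).add ((measurable_linfun _).comp measurable_snd)
      rw [hcomp, ← Measure.map_map hm2 e.measurable, hmp.map_eq]
      have hcomp2 : (fun p : ℝ × (Fin n → ℝ) => d 0 * p.1 + ∑ j : Fin n, d j.succ * p.2 j)
          = (fun q : ℝ × ℝ => q.1 + q.2) ∘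
              (Prod.map (fun x : ℝ => d 0 * x) (fun y : Fin n → ℝ => ∑ j, d j.succ * y j)) := rfl
      rw [hcomp2, ← Measure.map_map measurable_add
        (Measurable.prodMap (measurable_const_mul _) (measurable_linfun _)),
        ← Measure.map_prod_map _ _ (measurable_const_mul _) (measurable_linfun _),
        gaussianReal_map_const_mul, ih, mul_zero]
      refine (conv_gaussian _ _).trans ?_
      congr 1
      ext
      push_cast
      simp [Fin.sum_univ_succ]
      rfl

-- stage 5: shift of pi gaussian
lemma map_add_pi {n : ℕ} (d : Fin n → ℝ) :
    Measure.map (fun z : Fin n → ℝ => z + d) (Measure.pi fun _ : Fin n => gaussianReal 0 1)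
      = Measure.pi fun i : Fin n => gaussianReal (d i) 1 := by
  have h : ∀ i : Fin n, MeasurePreserving (fun x : ℝ => x + d i)
      (gaussianReal 0 1) (gaussianReal (d i) 1) := fun i =>
    ⟨measurable_add_const _, by rw [gaussianReal_map_add_const, zero_add]⟩
  have := measurePreserving_pi (fun _ : Fin n => gaussianReal 0 1)
    (fun i => gaussianReal (d i) 1) h
  exact this.map_eq
lemma gauss_shift_density (m : ℝ) :
    gaussianReal m 1 = (gaussianReal 0 1).withDensity
      (fun x => ENNReal.ofReal (Real.exp (m * x - m ^ 2 / 2))) := by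
  rw [gaussianReal_of_var_ne_zero m one_ne_zero, gaussianReal_of_var_ne_zero 0 one_ne_zero,
    ← withDensity_mul _ (measurable_gaussianPDF 0 1)
      (by fun_prop)]
  congr 1
  funext x
  unfold gaussianPDF
  rw [Pi.mul_apply, ← ENNReal.ofReal_mul (gaussianPDFReal_nonneg _ _ _)]
  congr 1
  unfold gaussianPDFReal
  have hexp : rexp (-(x - 0) ^ 2 / (2 * ((1:ℝ≥0):ℝ))) * rexp (m * x - m ^ 2 / 2)
      = rexp (-(x - m) ^ 2 / (2 * ((1:ℝ≥0):ℝ))) := by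
    rw [← Real.exp_add]; congr 1; push_cast; ring
  conv_rhs => rw [mul_assoc]
  rw [hexp]
lemma prod_withDensity {α β : Type*} [MeasurableSpace α] [MeasurableSpace β]
    (μ : Measure α) (ν : Measure β) [SigmaFinite μ] [SigmaFinite ν]
    (f : α → ℝ≥0∞) (g : β → ℝ≥0∞) (hf : Measurable f) (hg : Measurable g)
    (hf' : ∀ x, f x ≠ ∞) (hg' : ∀ y, g y ≠ ∞) :
    (μ.withDensity f).prod (ν.withDensity g)
      = (μ.prod ν).withDensity (fun p => f p.1 * g p.2) := by
  haveI := SigmaFinite.withDensity_of_ne_top' (μ := μ) hf'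
  haveI := SigmaFinite.withDensity_of_ne_top' (μ := ν) hg'
  refine Measure.prod_eq fun s t hs ht => ?_
  rw [withDensity_apply _ (hs.prod ht)]
  have hind : ∫⁻ p in s ×ˢ t, f p.1 * g p.2 ∂(μ.prod ν)
      = ∫⁻ p, (s.indicator f) p.1 * (t.indicator g) p.2 ∂(μ.prod ν) := by
    rw [← lintegral_indicator (hs.prod ht) (fun p : α × β => f p.1 * g p.2)]
    congr 1
    funext p
    by_cases h1 : p.1 ∈ s <;> by_cases h2 : p.2 ∈ t <;>
      simp [Set.indicator_apply, Set.mem_prod, h1, h2]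
  rw [hind, lintegral_prod_mul (hf.indicator hs).aemeasurable (hg.indicator ht).aemeasurable,
    lintegral_indicator hs f, lintegral_indicator ht g,
    withDensity_apply _ hs, withDensity_apply _ ht]
lemma map_symm_withDensity {α β : Type*} [MeasurableSpace α] [MeasurableSpace β]
    (e : α ≃ᵐ β) (ρ : Measure β) (h : β → ℝ≥0∞) (hm : Measurable h) :
    Measure.map e.symm (ρ.withDensity h)
      = (Measure.map e.symm ρ).withDensity (fun x => h (e x)) := by
  ext s hs
  rw [Measure.map_apply e.symm.measurable hs, withDensity_apply _ (e.symm.measurable hs),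
    withDensity_apply _ hs, Measure.restrict_map e.symm.measurable hs]
  have key : ∫⁻ a, h (e a) ∂(Measure.map e.symm (ρ.restrict (e.symm ⁻¹' s)))
      = ∫⁻ b, h (e (e.symm b)) ∂(ρ.restrict (e.symm ⁻¹' s)) :=
    lintegral_map (hm.comp e.measurable) e.symm.measurable
  rw [key]
  simp

lemma pi_withDensity (n : ℕ) (μ : Fin n → Measure ℝ)
    [∀ i, IsProbabilityMeasure (μ i)]
    (f : Fin n → ℝ → ℝ≥0∞) (hf : ∀ i, Measurable (f i)) (hf' : ∀ i x, f i x ≠ ∞) :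
    Measure.pi (fun i => (μ i).withDensity (f i))
      = (Measure.pi μ).withDensity (fun z => ∏ i, f i (z i)) := by
  induction n with
  | zero =>
      have h1 : (fun z : Fin 0 → ℝ => ∏ i, f i (z i)) = (1 : (Fin 0 → ℝ) → ℝ≥0∞) := by
        funext z; simp
      rw [h1, withDensity_one]
      rw [Measure.pi_of_empty, Measure.pi_of_empty]
  | succ n ih =>
      haveI : ∀ i : Fin (n+1), SigmaFinite ((μ i).withDensity (f i)) :=
        fun i => SigmaFinite.withDensity_of_ne_top' (hf' i)
      have hmp := measurePreserving_piFinSuccAbove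
        (fun i : Fin (n+1) => (μ i).withDensity (f i)) 0
      have hmp0 := measurePreserving_piFinSuccAbove μ 0
      set e := MeasurableEquiv.piFinSuccAbove (fun _ : Fin (n+1) => ℝ) 0 with he
      have h1 : Measure.pi (fun i => (μ i).withDensity (f i))
          = Measure.map e.symm (((μ 0).withDensity (f 0)).prod
              (Measure.pi fun j : Fin n => (μ (Fin.succAbove 0 j)).withDensity
                (f (Fin.succAbove 0 j)))) := by
        rw [← hmp.map_eq, Measure.map_map e.symm.measurable e.measurable]
        simp
      have hg : Measurable (fun z : Fin n → ℝ => ∏ i, f (Fin.succAbove 0 i) (z i)) :=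
        Finset.measurable_prod _ fun j _ => (hf _).comp (measurable_pi_apply j)
      have hg' : ∀ y : Fin n → ℝ, (∏ i, f (Fin.succAbove 0 i) (y i)) ≠ ∞ :=
        fun y => ENNReal.prod_ne_top fun j _ => hf' _ _
      have hh : Measurable (fun p : ℝ × (Fin n → ℝ) =>
          f 0 p.1 * ∏ i, f (Fin.succAbove 0 i) (p.2 i)) :=
        ((hf 0).comp measurable_fst).mul (hg.comp measurable_snd)
      rw [h1, ih (fun j => μ (Fin.succAbove 0 j)) (fun j => f (Fin.succAbove 0 j))
          (fun j => hf _) (fun j x => hf' _ x)]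
      rw [prod_withDensity _ _ _ _ (hf 0) hg (hf' 0) hg']
      rw [map_symm_withDensity e _ _ hh]
      rw [← hmp0.map_eq, Measure.map_map e.symm.measurable e.measurable]
      have h2 : (⇑e.symm ∘ ⇑e) = id := by funext z; simp
      rw [h2, Measure.map_id]
      congr 1
      funext z
      simp [he, MeasurableEquiv.piFinSuccAbove, Fin.prod_univ_succ, Fin.zero_succAbove, Fin.tail]

lemma normalPDF_eq : normalPDF = gaussianPDFReal 0 1 := by
  funext x
  unfold normalPDF gaussianPDFReal
  rw [div_eq_inv_mul]
  norm_num

lemma gauss_Ici (a : ℝ) :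
    gaussianReal 0 1 (Set.Ici a) = ENNReal.ofReal (stdNormalCDF (-a)) := by
  rw [gaussianReal_apply_eq_integral 0 one_ne_zero]
  congr 1
  unfold stdNormalCDF
  rw [normalPDF_eq]
  have hsym : ∀ x : ℝ, gaussianPDFReal 0 1 (-x) = gaussianPDFReal 0 1 x := by
    intro x; unfold gaussianPDFReal; norm_num
  rw [integral_Ici_eq_integral_Ioi, ← neg_neg a, ← integral_comp_neg_Iic (-a) (gaussianPDFReal 0 1)]
  simp_rw [hsym]
  norm_num

-- law of linear functional: tail probability
lemma linfun_tail {n : ℕ} (d : Fin n → ℝ) (hσ2 : 0 < ∑ i, d i ^ 2) (a : ℝ) :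
    (Measure.pi fun _ : Fin n => gaussianReal 0 1) {z | a ≤ ∑ i, d i * z i}
      = ENNReal.ofReal (stdNormalCDF (-(a / Real.sqrt (∑ i, d i ^ 2)))) := by
  set σ2 := ∑ i, d i ^ 2 with hσ2def
  set δ := Real.sqrt σ2 with hδdef
  have hδ : 0 < δ := Real.sqrt_pos.mpr hσ2
  have hset : {z : Fin n → ℝ | a ≤ ∑ i, d i * z i}
      = (fun z : Fin n → ℝ => ∑ i, d i * z i) ⁻¹' Set.Ici a := rfl
  rw [hset, ← Measure.map_apply (measurable_linfun d) measurableSet_Ici, map_linear]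
  have hmap : gaussianReal 0 (⟨σ2, hσ2.le⟩ : ℝ≥0)
      = Measure.map (fun x : ℝ => δ * x) (gaussianReal 0 1) := by
    rw [gaussianReal_map_const_mul δ, mul_zero]
    congr 1
    ext
    push_cast
    simp [hδdef, Real.sq_sqrt hσ2.le]
    rfl
  rw [hmap, Measure.map_apply (measurable_const_mul δ) measurableSet_Ici]
  have hpre : (fun x : ℝ => δ * x) ⁻¹' Set.Ici a = Set.Ici (a / δ) := by
    ext x
    simp only [Set.mem_preimage, Set.mem_Ici]
    rw [div_le_iff₀ hδ, mul_comm]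
  rw [hpre, gauss_Ici]
theorem np_core (n : ℕ) (d : Fin n → ℝ) (hd : d ≠ 0) (A : Set (Fin n → ℝ))
    (hA : MeasurableSet A) (α zα : ℝ) (hzα : stdNormalCDF zα = α)
    (hPA : (Measure.pi fun _ : Fin n => gaussianReal 0 1) A = ENNReal.ofReal α) :
    Measure.map (fun z => z + d) (Measure.pi fun _ : Fin n => gaussianReal 0 1) A
      ≤ ENNReal.ofReal (stdNormalCDF (zα + Real.sqrt (∑ i, d i ^ 2))) := by
  set P := Measure.pi fun _ : Fin n => gaussianReal 0 1 with hPdef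
  set σ2 := ∑ i, d i ^ 2 with hσ2def
  have hσ2 : 0 < σ2 := by
    obtain ⟨i, hi⟩ := Function.ne_iff.mp hd
    exact Finset.sum_pos' (fun j _ => sq_nonneg _)
      ⟨i, Finset.mem_univ i, lt_of_le_of_ne (sq_nonneg _) (Ne.symm (pow_ne_zero 2 hi))⟩
  set δ := Real.sqrt σ2 with hδdef
  have hδ : 0 < δ := Real.sqrt_pos.mpr hσ2
  have hδ2 : δ ^ 2 = σ2 := Real.sq_sqrt hσ2.le
  set T := fun z : Fin n → ℝ => ∑ i, d i * z i with hTdef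
  set R := {z : Fin n → ℝ | -(zα * δ) ≤ T z} with hRdef
  have hR : MeasurableSet R := measurableSet_le measurable_const (measurable_linfun d)
  set μd := Measure.map (fun z => z + d) P with hμddef
  have haddm : Measurable (fun z : Fin n → ℝ => z + d) :=
    measurable_id.add_const d
  -- density representation
  set L := fun z : Fin n → ℝ => ENNReal.ofReal (Real.exp (T z - σ2 / 2)) with hLdef
  have hLm : Measurable L := by
    apply Measurable.ennreal_ofReal
    exact ((measurable_linfun d).sub_const _).exp
  have hμd : μd = P.withDensity L := by
    rw [hμddef, map_add_pi d]
    have := pi_withDensity n (fun _ => gaussianReal 0 1)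
      (fun i x => ENNReal.ofReal (Real.exp (d i * x - d i ^ 2 / 2)))
      (fun i => by fun_prop) (fun i x => ENNReal.ofReal_ne_top)
    have hcoord : (fun i : Fin n => gaussianReal (d i) 1)
        = fun i => (gaussianReal 0 1).withDensity
            (fun x => ENNReal.ofReal (Real.exp (d i * x - d i ^ 2 / 2))) := by
      funext i; exact gauss_shift_density (d i)
    rw [hcoord, this]
    congr 1
    funext z
    rw [← ENNReal.ofReal_prod_of_nonneg (fun i _ => (Real.exp_pos _).le), ← Real.exp_sum]
    congr 2
    rw [Finset.sum_sub_distrib, ← Finset.sum_div]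
  -- P R = ofReal α
  have hPR : P R = ENNReal.ofReal α := by
    rw [hRdef, hTdef, linfun_tail d hσ2]
    rw [show -(-(zα * δ) / Real.sqrt σ2) = zα by rw [← hδdef]; field_simp]
    rw [hzα]
  -- μd R
  have hμdR : μd R = ENNReal.ofReal (stdNormalCDF (zα + δ)) := by
    rw [hμddef, Measure.map_apply haddm hR]
    have hpre : (fun z : Fin n → ℝ => z + d) ⁻¹' R = {z | -(zα * δ) - σ2 ≤ T z} := by
      ext z
      simp only [Set.mem_preimage, hRdef, Set.mem_setOf_eq, hTdef]
      have hTz : ∑ i, d i * (z + d) i = (∑ i, d i * z i) + σ2 := by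
        rw [hσ2def, ← Finset.sum_add_distrib]
        apply Finset.sum_congr rfl
        intro i _
        simp [Pi.add_apply]
        ring
      rw [hTz, sub_le_iff_le_add]
    rw [hpre, hTdef, linfun_tail d hσ2]
    congr 2
    rw [← hδdef, ← hδ2]
    field_simp
    ring
  -- NP comparison
  set k := ENNReal.ofReal (Real.exp (-(zα * δ) - σ2 / 2)) with hkdef
  have claim1 : μd (A \ R) ≤ k * P (A \ R) := by
    rw [hμd, withDensity_apply _ (hA.diff hR)]
    calc ∫⁻ z in A \ R, L z ∂P ≤ ∫⁻ _ in A \ R, k ∂P := by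
          apply setLIntegral_mono measurable_const
          intro z hz
          have hzR : ¬(-(zα * δ) ≤ T z) := hz.2
          exact ENNReal.ofReal_le_ofReal (Real.exp_le_exp.mpr
            (sub_le_sub_right (le_of_not_ge hzR) _))
      _ = k * P (A \ R) := by rw [setLIntegral_const]
  have claim2 : k * P (R \ A) ≤ μd (R \ A) := by
    rw [hμd, withDensity_apply _ (hR.diff hA)]
    calc k * P (R \ A) = ∫⁻ _ in R \ A, k ∂P := by rw [setLIntegral_const]
      _ ≤ ∫⁻ z in R \ A, L z ∂P := by
          apply setLIntegral_mono hLm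
          intro z hz
          exact ENNReal.ofReal_le_ofReal (Real.exp_le_exp.mpr
            (sub_le_sub_right hz.1 _))
  have hfin : P (A ∩ R) ≠ ∞ := measure_ne_top _ _
  have claim3 : P (A \ R) = P (R \ A) := by
    have h1 : P (A ∩ R) + P (A \ R) = P A := measure_inter_add_diff A hR
    have h2 : P (R ∩ A) + P (R \ A) = P R := measure_inter_add_diff R hA
    rw [Set.inter_comm R A] at h2
    rw [hPA] at h1; rw [hPR] at h2
    have := h1.trans h2.symm
    exact (ENNReal.add_right_inj hfin).mp this
  calc μd A = μd (A ∩ R) + μd (A \ R) := (measure_inter_add_diff A hR).symm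
    _ ≤ μd (A ∩ R) + k * P (A \ R) := add_le_add_right claim1 _
    _ = μd (A ∩ R) + k * P (R \ A) := by rw [claim3]
    _ ≤ μd (A ∩ R) + μd (R \ A) := add_le_add_right claim2 _
    _ = μd (R ∩ A) + μd (R \ A) := by rw [Set.inter_comm]
    _ = μd R := measure_inter_add_diff R hA
    _ = ENNReal.ofReal (stdNormalCDF (zα + δ)) := hμdR

end NPAux

/-- The Neyman–Pearson bound used in the proof of Theorem 5: if a level-`α` test based
on `S` has critical value `q` under `N(0,V)`, its power at shift `c ≠ 0` is at most
`Φ(z_α + √(cᵀ·V⁻¹·c))`. -/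
theorem neyman_pearson_power_bound
    {p : ℕ} (V : Matrix (Fin p) (Fin p) ℝ) (hV : V.PosDef)
    (α : ℝ) (hα0 : 0 < α) (hα1 : α < 1)
    (S : (Fin p → ℝ) → ℝ) (hS : Measurable S)
    (q : ℝ) (hq : gaussianPi 0 hV.posSemidef {z | q < S z} = ENNReal.ofReal α)
    (zα : ℝ) (hzα : stdNormalCDF zα = α) :
    ∀ c : Fin p → ℝ, c ≠ 0 →
      gaussianPi 0 hV.posSemidef {z | q < S (z + c)} ≤
        ENNReal.ofReal (stdNormalCDF (zα + Real.sqrt (c ⬝ᵥ V⁻¹.mulVec c))) := by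
  intro c hc
  set P := Measure.pi fun _ : Fin p => gaussianReal 0 1 with hPdef
  set Q := hV.posSemidef.sqrt with hQdef
  have hQQ : Q * Q = V := hV.posSemidef.sqrt_mul_self
  have hQsym : Qᵀ = Q := by
    rw [← Matrix.conjTranspose_eq_transpose_of_trivial]
    exact hV.posSemidef.sqrt_isHermitian
  have hdet : IsUnit Q.det := by
    rw [isUnit_iff_ne_zero]
    intro h0
    have : V.det = 0 := by rw [← hQQ, Matrix.det_mul, h0, mul_zero]
    exact (ne_of_gt hV.det_pos) this
  set d := Q⁻¹.mulVec c with hddef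
  have hQd : Q.mulVec d = c := by
    rw [hddef, Matrix.mulVec_mulVec, Matrix.mul_nonsing_inv Q hdet, Matrix.one_mulVec]
  have hd0 : d ≠ 0 := by
    intro h
    apply hc
    rw [← hQd, h, Matrix.mulVec_zero]
  have hquad : c ⬝ᵥ V⁻¹.mulVec c = ∑ i, d i ^ 2 := by
    have hVinv : V⁻¹ = Q⁻¹ * Q⁻¹ := by rw [← hQQ, Matrix.mul_inv_rev]
    rw [hVinv, ← Matrix.mulVec_mulVec, ← hddef]
    nth_rewrite 1 [← hQd]
    rw [dotProduct_mulVec, ← Matrix.mulVec_transpose]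
    rw [show (Q⁻¹)ᵀ = Q⁻¹ by rw [Matrix.transpose_nonsing_inv, hQsym]]
    rw [Matrix.mulVec_mulVec, Matrix.nonsing_inv_mul Q hdet, Matrix.one_mulVec]
    simp [dotProduct, sq]
  have hQm : Measurable (fun z : Fin p → ℝ => Q.mulVec z) :=
    measurable_pi_iff.mpr fun i =>
      show Measurable fun z : Fin p → ℝ => ∑ j, Q i j * z j from
        Finset.measurable_sum _ fun j _ => (measurable_pi_apply j).const_mul _
  have hmap0 : (fun z : Fin p → ℝ => (0 : Fin p → ℝ) + Q.mulVec z)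
      = fun z => Q.mulVec z := by funext z; simp
  have hgp : ∀ s : Set (Fin p → ℝ), MeasurableSet s →
      gaussianPi 0 hV.posSemidef s = P (Q.mulVec ⁻¹' s) := by
    intro s hs
    rw [gaussianPi, hmap0, Measure.map_apply hQm hs]
  have hSB : MeasurableSet {x : Fin p → ℝ | q < S x} :=
    measurableSet_lt measurable_const hS
  set A := Q.mulVec ⁻¹' {x | q < S x} with hAdef
  have hA : MeasurableSet A := hQm hSB
  have hPA : P A = ENNReal.ofReal α := by rw [← hgp _ hSB, hq]
  have haddc : Measurable (fun z : Fin p → ℝ => z + c) :=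
    measurable_id.add_const c
  have hsc : MeasurableSet {z : Fin p → ℝ | q < S (z + c)} :=
    measurableSet_lt measurable_const (hS.comp haddc)
  have haddm : Measurable (fun z : Fin p → ℝ => z + d) :=
    measurable_id.add_const d
  have hkey : gaussianPi 0 hV.posSemidef {z | q < S (z + c)}
      = Measure.map (fun z => z + d) P A := by
    rw [hgp _ hsc, Measure.map_apply haddm hA]
    congr 1
    ext z
    simp only [Set.mem_preimage, Set.mem_setOf_eq, hAdef]
    rw [Matrix.mulVec_add, hQd]
  rw [hkey, hquad]
  exact np_core p d hd0 A hA α zα hzα hPA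

end
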